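/- Let F be a field of characteristic p. Define the Artin–Schreier–Kato operator ℘ on Ω^n_F by sending a·(db_1/b_1)∧...∧(db_n/b_n) to (a^p − a)·(db_1/b_1)∧...∧(db_n/b_n) (extended additively). Then ℘ is a well-defined additive group homomorphism from the subgroup of Ω^n_F generated by such logarithmic forms to Ω^n_F / dΩ^{n-1}_F. -/

import Mathlib

set_option synthInstance.maxHeartbeats 400000
set_option maxHeartbeats 1000000
set_option linter.unusedSectionVars false
set_option linter.unusedVariables false


/-- The additive subgroup generated by logarithmic `n`-forms
`a·(db₁/b₁) ∧ ⋯ ∧ (db_n/b_n)` with `a ∈ F`, `bᵢ ∈ F^*`. -/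
noncomputable def logForms (F : Type) [Field F] (n : ℕ) :
    AddSubgroup (ExteriorAlgebra F (KaehlerDifferential ℤ F)) :=
  AddSubgroup.closure
    {x | ∃ (a : F) (b : Fin n → F), (∀ i, b i ≠ 0) ∧
      x = a • ExteriorAlgebra.ιMulti F n fun i => (b i)⁻¹ • KaehlerDifferential.D ℤ F (b i)}

/-- The additive subgroup of `n`-forms `b·dc₁ ∧ ⋯ ∧ dc_n`. -/
noncomputable def nForms (F : Type) [Field F] (n : ℕ) :
    AddSubgroup (ExteriorAlgebra F (KaehlerDifferential ℤ F)) :=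
  AddSubgroup.closure
    {x | ∃ (b : F) (c : Fin n → F),
      x = b • ExteriorAlgebra.ιMulti F n fun i => KaehlerDifferential.D ℤ F (c i)}

/-- An additive endomorphism of the exterior algebra of `Ω¹_F` is an exterior derivative if it
sends `b·dc₁ ∧ ⋯ ∧ dc_m` to `db ∧ dc₁ ∧ ⋯ ∧ dc_m` for all `m`. -/
def IsExtDer (F : Type) [Field F]
    (d : ExteriorAlgebra F (KaehlerDifferential ℤ F) →+
         ExteriorAlgebra F (KaehlerDifferential ℤ F)) : Prop :=
  ∀ (m : ℕ) (b : F) (c : Fin m → F),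
    d (b • ExteriorAlgebra.ιMulti F m fun i => KaehlerDifferential.D ℤ F (c i)) =
      ExteriorAlgebra.ιMulti F (m + 1)
        (Fin.cons (KaehlerDifferential.D ℤ F b) fun i => KaehlerDifferential.D ℤ F (c i))


section ASK

variable (p : ℕ) [Fact p.Prime] (F : Type) [Field F] [CharP F p]

local notation "Ω1" => KaehlerDifferential ℤ F
local notation "DF" => KaehlerDifferential.D ℤ F
local notation "ΛF" => ExteriorAlgebra F (KaehlerDifferential ℤ F)

theorem ask_D_pow_char (c : F) : DF (c ^ p) = 0 := by
  rw [Derivation.leibniz_pow, ← Nat.cast_smul_eq_nsmul F, CharP.cast_eq_zero F p, zero_smul]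

theorem ask_D_frob_mul (c b : F) : DF (c ^ p * b) = c ^ p • DF b := by
  rw [Derivation.leibniz, ask_D_pow_char, smul_zero, add_zero]

/-- The additive subgroup of exact 1-forms. -/
noncomputable def ask_dSub : AddSubgroup Ω1 :=
  AddMonoidHom.range (LinearMap.toAddMonoidHom (Derivation.toLinearMap DF))

theorem ask_mem_dSub {x : Ω1} : x ∈ ask_dSub F ↔ ∃ f : F, DF f = x := Iff.rfl

/-- `Ω¹/dF`, with a phantom parameter `p` on which instances are keyed. -/
def ask_Q1 (p : ℕ) (F : Type) [Field F] : Type :=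
  KaehlerDifferential ℤ F ⧸ ask_dSub F

noncomputable instance : AddCommGroup (ask_Q1 p F) :=
  inferInstanceAs (AddCommGroup (Ω1 ⧸ ask_dSub F))

/-- The quotient map onto `Ω¹/dF`. -/
noncomputable def ask_q1mk : Ω1 →+ ask_Q1 p F := QuotientAddGroup.mk' (ask_dSub F)

theorem ask_q1ind {motive : ask_Q1 p F → Prop}
    (h : ∀ x, motive (ask_q1mk p F x)) : ∀ q, motive q :=
  fun q => QuotientAddGroup.induction_on q h

theorem ask_q1mk_eq_zero {x : Ω1} (h : x ∈ ask_dSub F) : ask_q1mk p F x = 0 :=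
  (QuotientAddGroup.eq_zero_iff _).2 h

theorem ask_q1mk_zero_iff {x : Ω1} : ask_q1mk p F x = 0 ↔ x ∈ ask_dSub F :=
  QuotientAddGroup.eq_zero_iff _

noncomputable instance : SMul F (ask_Q1 p F) :=
  ⟨fun c => QuotientAddGroup.lift _
    ((ask_q1mk p F).comp
      (AddMonoidHom.mk' (fun x : Ω1 => c ^ p • x) (fun x y => smul_add _ x y)))
    (by
      rintro x ⟨f, rfl⟩
      exact ask_q1mk_eq_zero p F ⟨c ^ p * f, ask_D_frob_mul p F c f⟩)⟩

theorem ask_q1smul_mk (c : F) (x : Ω1) :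
    c • (ask_q1mk p F x) = ask_q1mk p F (c ^ p • x) := rfl

noncomputable instance : Module F (ask_Q1 p F) where
  one_smul x := by
    induction x using ask_q1ind with | _ y =>
    rw [ask_q1smul_mk, one_pow, one_smul]
  mul_smul c c' x := by
    induction x using ask_q1ind with | _ y =>
    rw [ask_q1smul_mk, ask_q1smul_mk, ask_q1smul_mk, mul_pow, mul_smul]
  smul_zero c := by
    rw [← map_zero (ask_q1mk p F), ask_q1smul_mk, smul_zero]
  smul_add c x y := by
    induction x using ask_q1ind with | _ a =>
    induction y using ask_q1ind with | _ b =>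
    rw [← map_add, ask_q1smul_mk, ask_q1smul_mk, ask_q1smul_mk, smul_add, map_add]
  add_smul c c' x := by
    induction x using ask_q1ind with | _ y =>
    rw [ask_q1smul_mk, ask_q1smul_mk, ask_q1smul_mk, add_pow_char, add_smul, map_add]
  zero_smul x := by
    induction x using ask_q1ind with | _ y =>
    have hp : p ≠ 0 := (Fact.out : p.Prime).ne_zero
    rw [ask_q1smul_mk, zero_pow hp, zero_smul, map_zero]

noncomputable instance : IsScalarTower ℤ F (ask_Q1 p F) where
  smul_assoc z c x := by
    induction x using ask_q1ind with | _ y =>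
    have h2 : ((z : F)) ^ p = ((z : F)) := by
      have := map_intCast (frobenius F p) z
      rwa [frobenius_def] at this
    have h3 : z • c • ask_q1mk p F y = ask_q1mk p F (z • c ^ p • y) := by
      rw [ask_q1smul_mk, ← map_zsmul (ask_q1mk p F)]
    have h4 : (z • (c ^ p • y)) = ((z : F) * c ^ p) • y := by
      rw [← Int.cast_smul_eq_zsmul F, smul_smul]
    rw [h3, h4, zsmul_eq_mul, ask_q1smul_mk, mul_pow, h2]

end ASK

section ASK2
variable (p : ℕ) [Fact p.Prime] (F : Type) [Field F] [CharP F p]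

local notation "Ω1" => KaehlerDifferential ℤ F
local notation "DF" => KaehlerDifferential.D ℤ F

theorem ask_choose_div_mul_succ (hp : p.Prime) {i : ℕ} (hi : i < p - 1) :
    (p.choose (i + 1) / p) * (i + 1) = (p - 1).choose i := by
  have hdvd : p ∣ p.choose (i + 1) := hp.dvd_choose_self (Nat.succ_ne_zero i) (by omega)
  obtain ⟨t, ht⟩ := hdvd
  have hmul : p * ((p - 1).choose i) = p.choose (i + 1) * (i + 1) := by
    have h := Nat.add_one_mul_choose_eq (p - 1) i
    have h2 : (p - 1) + 1 = p := Nat.succ_pred_eq_of_pos hp.pos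
    rw [h2] at h
    rw [h]
  rw [ht, Nat.mul_div_cancel_left t hp.pos]
  rw [ht, mul_assoc] at hmul
  exact (Nat.eq_of_mul_eq_mul_left hp.pos hmul).symm

theorem ask_choose_div_mul_sub (hp : p.Prime) {i : ℕ} (hi : i < p - 1) :
    (p.choose (i + 1) / p) * (p - 1 - i) = (p - 1).choose (i + 1) := by
  have hdvd : p ∣ p.choose (i + 1) := hp.dvd_choose_self (Nat.succ_ne_zero i) (by omega)
  obtain ⟨t, ht⟩ := hdvd
  have hmul : p * ((p - 1).choose (i + 1)) = p.choose (i + 1) * (p - 1 - i) := by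
    have h := Nat.add_one_mul_choose_eq (p - 1) (i + 1)
    have h2 : (p - 1) + 1 = p := Nat.succ_pred_eq_of_pos hp.pos
    rw [h2] at h
    have h3 := Nat.choose_succ_right_eq p (i + 1)
    have h4 : p - (i + 1) = p - 1 - i := by omega
    rw [h4] at h3
    rw [h, h3]
  rw [ht, Nat.mul_div_cancel_left t hp.pos]
  rw [ht, mul_assoc] at hmul
  exact (Nat.eq_of_mul_eq_mul_left hp.pos hmul).symm

theorem ask_binomial (a b : F) : ∃ w : F,
    (a + b) ^ (p - 1) • DF (a + b)
      = a ^ (p - 1) • DF a + b ^ (p - 1) • DF b + DF w := by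
  have hp : p.Prime := Fact.out
  obtain ⟨q, hq⟩ : ∃ q, p = q + 1 := ⟨p - 1, by have := hp.pos; omega⟩
  subst hq
  simp only [Nat.add_sub_cancel]
  refine ⟨∑ i ∈ Finset.range (q + 1),
      ((Nat.choose (q + 1) i / (q + 1) : ℕ) : F) * (a ^ i * b ^ (q + 1 - i)), ?_⟩
  set k : ℕ → F := fun i => ((Nat.choose (q + 1) i / (q + 1) : ℕ) : F) with hk
  have hA : ∑ i ∈ Finset.range (q + 1), (k i * ((i : F) * (a ^ (i - 1) * b ^ (q + 1 - i))))
      = (a + b) ^ q - a ^ q := by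
    rw [Finset.sum_range_succ']
    simp only [Nat.cast_zero, zero_mul, mul_zero, add_zero, Nat.succ_sub_succ,
      Nat.add_sub_cancel, Nat.sub_zero]
    rw [add_pow, Finset.sum_range_succ]
    simp only [Nat.choose_self, Nat.cast_one, mul_one, Nat.sub_self, pow_zero]
    rw [add_sub_cancel_right]
    refine Finset.sum_congr rfl ?_
    intro i hi
    have hi' : i < q := Finset.mem_range.1 hi
    have hco : ((q + 1).choose (i + 1) / (q + 1)) * (i + 1) = q.choose i :=
      ask_choose_div_mul_succ (q + 1) hp (by omega)
    have hcast : k (i + 1) * ((i + 1 : ℕ) : F) = (q.choose i : F) := by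
      rw [hk, ← Nat.cast_mul, hco]
    calc k (i + 1) * (((i + 1 : ℕ) : F) * (a ^ i * b ^ (q - i)))
        = (k (i + 1) * ((i + 1 : ℕ) : F)) * (a ^ i * b ^ (q - i)) := by push_cast; ring
      _ = (q.choose i : F) * (a ^ i * b ^ (q - i)) := by rw [hcast]
      _ = a ^ i * b ^ (q - i) * (q.choose i : F) := by ring
  have hB : ∑ i ∈ Finset.range (q + 1), (k i * (((q + 1 - i : ℕ) : F) * (a ^ i * b ^ (q - i))))
      = (a + b) ^ q - b ^ q := by
    rw [Finset.sum_range_succ']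
    have hk0 : k 0 = 0 := by
      rw [hk]; norm_num [Nat.div_eq_of_lt hp.one_lt]
    rw [hk0]
    simp only [zero_mul, add_zero, Nat.succ_sub_succ]
    rw [add_pow, Finset.sum_range_succ']
    simp only [pow_zero, Nat.choose_zero_right, Nat.cast_one, mul_one, one_mul, Nat.sub_zero]
    rw [add_sub_cancel_right]
    refine Finset.sum_congr rfl ?_
    intro i hi
    have hi' : i < q := Finset.mem_range.1 hi
    have hco : ((q + 1).choose (i + 1) / (q + 1)) * (q - i) = q.choose (i + 1) :=
      ask_choose_div_mul_sub (q + 1) hp (by omega)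
    have hcast : k (i + 1) * ((q - i : ℕ) : F) = (q.choose (i + 1) : F) := by
      rw [hk, ← Nat.cast_mul, hco]
    calc k (i + 1) * (((q - i : ℕ) : F) * (a ^ (i + 1) * b ^ (q - (i + 1))))
        = (k (i + 1) * ((q - i : ℕ) : F)) * (a ^ (i + 1) * b ^ (q - (i + 1))) := by ring
      _ = (q.choose (i + 1) : F) * (a ^ (i + 1) * b ^ (q - (i + 1))) := by rw [hcast]
      _ = a ^ (i + 1) * b ^ (q - (i + 1)) * (q.choose (i + 1) : F) := by ring
  have hterm : ∀ i ∈ Finset.range (q + 1),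
      DF (k i * (a ^ i * b ^ (q + 1 - i)))
        = (k i * ((i : F) * (a ^ (i - 1) * b ^ (q + 1 - i)))) • DF a
          + (k i * (((q + 1 - i : ℕ) : F) * (a ^ i * b ^ (q - i)))) • DF b := by
    intro i hi
    have hsub : q + 1 - i - 1 = q - i := by omega
    rw [hk, Derivation.leibniz, Derivation.map_natCast, smul_zero, add_zero,
        Derivation.leibniz, Derivation.leibniz_pow, Derivation.leibniz_pow,
        ← Nat.cast_smul_eq_nsmul F, ← Nat.cast_smul_eq_nsmul F, hsub]
    match_scalars <;> push_cast <;> ring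
  have hD : DF (∑ i ∈ Finset.range (q + 1), k i * (a ^ i * b ^ (q + 1 - i)))
      = ((a + b) ^ q - a ^ q) • DF a + ((a + b) ^ q - b ^ q) • DF b := by
    rw [map_sum, Finset.sum_congr rfl hterm, Finset.sum_add_distrib,
      ← Finset.sum_smul, ← Finset.sum_smul, hA, hB]
  rw [hD, map_add]
  module

end ASK2

section ASK3
variable (p : ℕ) [Fact p.Prime] (F : Type) [Field F] [CharP F p]

local notation "Ω1" => KaehlerDifferential ℤ F
local notation "DF" => KaehlerDifferential.D ℤ F

/-- The map `a ↦ [a^(p-1) da]` is additive. -/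
theorem ask_delta_add (a b : F) :
    ask_q1mk p F ((a + b) ^ (p - 1) • DF (a + b))
      = ask_q1mk p F (a ^ (p - 1) • DF a) + ask_q1mk p F (b ^ (p - 1) • DF b) := by
  obtain ⟨w, hw⟩ := ask_binomial p F a b
  rw [hw, map_add, map_add, ask_q1mk_eq_zero p F (x := DF w) ⟨w, rfl⟩, add_zero]

/-- The Artin–Schreier–Cartier derivation `δ : F → Ω¹/dF`, `a ↦ [a^(p-1) da]`,
valued in the Frobenius-twisted module `Ω¹/dF`. -/
noncomputable def ask_delta : Derivation ℤ F (ask_Q1 p F) where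
  toLinearMap :=
    (AddMonoidHom.mk' (fun a : F => ask_q1mk p F (a ^ (p - 1) • DF a))
      (fun a b => ask_delta_add p F a b)).toIntLinearMap
  map_one_eq_zero' := by
    simp only [AddMonoidHom.toIntLinearMap, LinearMap.coe_mk, AddHom.coe_mk,
      AddMonoidHom.mk'_apply, one_pow, one_smul, Derivation.map_one_eq_zero, map_zero]
  leibniz' a b := by
    simp only [AddMonoidHom.toIntLinearMap, LinearMap.coe_mk, AddHom.coe_mk,
      AddMonoidHom.mk'_apply]
    rw [ask_q1smul_mk, ask_q1smul_mk, ← map_add]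
    congr 1
    have hp : p.Prime := Fact.out
    obtain ⟨q, hq⟩ : ∃ q, p = q + 1 := ⟨p - 1, by have := hp.pos; omega⟩
    subst hq
    simp only [Nat.add_sub_cancel]
    rw [Derivation.leibniz]
    match_scalars <;> ring

theorem ask_delta_apply (a : F) :
    ask_delta p F a = ask_q1mk p F (a ^ (p - 1) • DF a) := rfl

/-- The induced twisted-linear map `Ω¹ → Ω¹/dF`. -/
noncomputable def ask_lam : Ω1 →ₗ[F] ask_Q1 p F :=
  (ask_delta p F).liftKaehlerDifferential

theorem ask_lam_D (a : F) : ask_lam p F (DF a) = ask_q1mk p F (a ^ (p - 1) • DF a) :=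
  (ask_delta p F).liftKaehlerDifferential_comp_D a

end ASK3

section ASK4
variable (p : ℕ) [Fact p.Prime] (F : Type) [Field F] [CharP F p]

local notation "Ω1" => KaehlerDifferential ℤ F
local notation "DF" => KaehlerDifferential.D ℤ F

/-- A subset of `{da}` that is a basis of `Ω¹`. -/
noncomputable def ask_bset : Set Ω1 :=
  (exists_linearIndependent F (Set.range (DF : F → Ω1))).choose

theorem ask_bset_sub : ask_bset F ⊆ Set.range (DF : F → Ω1) :=
  (exists_linearIndependent F (Set.range (DF : F → Ω1))).choose_spec.1

theorem ask_bset_span : Submodule.span F (ask_bset F) = ⊤ := by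
  have h := (exists_linearIndependent F (Set.range (DF : F → Ω1))).choose_spec.2.1
  rw [show (exists_linearIndependent F (Set.range (DF : F → Ω1))).choose = ask_bset F from rfl] at h
  rw [h, KaehlerDifferential.span_range_derivation]

theorem ask_bset_li : LinearIndependent F ((↑) : ask_bset F → Ω1) :=
  (exists_linearIndependent F (Set.range (DF : F → Ω1))).choose_spec.2.2

/-- The corresponding basis. -/
noncomputable def ask_basis : Module.Basis (ask_bset F) F Ω1 :=
  Module.Basis.mk (ask_bset_li F) (by rw [Subtype.range_coe, ask_bset_span])

/-- For each basis vector, a choice of `a` with `da` the basis vector. -/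
noncomputable def ask_alpha (k : ask_bset F) : F := (ask_bset_sub F k.2).choose

theorem ask_alpha_spec (k : ask_bset F) : DF (ask_alpha F k) = (k : Ω1) :=
  (ask_bset_sub F k.2).choose_spec

theorem ask_basis_apply (k : ask_bset F) : ask_basis F k = DF (ask_alpha F k) := by
  rw [ask_basis, Module.Basis.mk_apply, ask_alpha_spec]

/-- The Frobenius-semilinear "inverse Cartier representative" map `γ₁`. -/
noncomputable def ask_gam1 (ω : Ω1) : Ω1 :=
  ((ask_basis F).repr ω).sum fun k c =>
    (c ^ p * (ask_alpha F k) ^ (p - 1)) • DF (ask_alpha F k)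

theorem ask_gam1_zero_coef : ∀ k : ask_bset F,
    ((0 : F) ^ p * (ask_alpha F k) ^ (p - 1)) • DF (ask_alpha F k) = 0 := by
  intro k
  have hp : p ≠ 0 := (Fact.out : p.Prime).ne_zero
  rw [zero_pow hp, zero_mul, zero_smul]

theorem ask_gam1_add (x y : Ω1) :
    ask_gam1 p F (x + y) = ask_gam1 p F x + ask_gam1 p F y := by
  unfold ask_gam1
  rw [map_add]
  refine Finsupp.sum_add_index' (fun k => ask_gam1_zero_coef p F k) ?_
  intro k c c'
  rw [add_pow_char, add_mul, add_smul]

theorem ask_gam1_smul (c : F) (x : Ω1) :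
    ask_gam1 p F (c • x) = c ^ p • ask_gam1 p F x := by
  unfold ask_gam1
  rw [map_smul, Finsupp.sum_smul_index' (fun k => ask_gam1_zero_coef p F k), Finsupp.smul_sum]
  refine Finsupp.sum_congr ?_
  intro k _
  rw [smul_eq_mul, mul_pow, smul_smul, mul_assoc]

theorem ask_mkq1_gam1 (ω : Ω1) : ask_q1mk p F (ask_gam1 p F ω) = ask_lam p F ω := by
  conv_rhs => rw [← (ask_basis F).linearCombination_repr ω]
  rw [Finsupp.linearCombination_apply, Finsupp.sum, map_sum, ask_gam1, Finsupp.sum, map_sum]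
  refine Finset.sum_congr rfl ?_
  intro k _
  rw [(ask_lam p F).map_smul, ask_basis_apply, ask_lam_D, ask_q1smul_mk, smul_smul]

end ASK4

section ASK5
variable (p : ℕ) [Fact p.Prime] (F : Type) [Field F] [CharP F p]

local notation "Ω1" => KaehlerDifferential ℤ F
local notation "DF" => KaehlerDifferential.D ℤ F
local notation "ΛF" => ExteriorAlgebra F (KaehlerDifferential ℤ F)

open ExteriorAlgebra

/-- "Semiclosed" generators `u^p w^(p-1) dw`. -/
noncomputable def ask_C : AddSubgroup Ω1 :=
  AddSubgroup.closure {x | ∃ u w : F, x = (u ^ p * w ^ (p - 1)) • DF w}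

theorem ask_gam1_mem_C (ω : Ω1) : ask_gam1 p F ω ∈ ask_C p F := by
  refine AddSubgroup.sum_mem _ ?_
  intro k _
  exact AddSubgroup.subset_closure ⟨((ask_basis F).repr ω) k, ask_alpha F k, rfl⟩

/-- The subgroup of `Λ` generated by pure wedges of exact forms (in positive degree `n`). -/
noncomputable def ask_Gpp (F : Type) [Field F] (n : ℕ) : AddSubgroup (ExteriorAlgebra F (KaehlerDifferential ℤ F)) :=
  AddSubgroup.closure {x | ∃ g : Fin n → F, 0 < n ∧
    x = ExteriorAlgebra.ιMulti F n fun i => KaehlerDifferential.D ℤ F (g i)}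

theorem ask_update_comp (g : Fin 0 → F) : True := trivial

theorem ask_D_comp_update {n : ℕ} (g : Fin n → F) (i0 : Fin n) (e : F) :
    (Function.update (fun i => DF (g i)) i0 (DF e))
      = fun i => DF (Function.update g i0 e i) := by
  funext i
  rcases eq_or_ne i i0 with rfl | hne
  · rw [Function.update_self, Function.update_self]
  · rw [Function.update_of_ne hne, Function.update_of_ne hne]

theorem ask_Gpp_smul {n : ℕ} (c : F) {x : ΛF} (hx : x ∈ ask_Gpp F n) :
    c ^ p • x ∈ ask_Gpp F n := by
  induction hx using AddSubgroup.closure_induction with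
  | mem y hy =>
    obtain ⟨g, hn, rfl⟩ := hy
    set i0 : Fin n := ⟨0, hn⟩
    have h1 : (ιMulti F n fun i => DF (g i)) =
        ιMulti F n (Function.update (fun i => DF (g i)) i0 (DF (g i0))) := by
      rw [Function.update_eq_self]
    rw [h1, ← (ιMulti F n).map_update_smul, ← ask_D_frob_mul p F, ask_D_comp_update]
    exact AddSubgroup.subset_closure ⟨Function.update g i0 (c ^ p * g i0), hn, rfl⟩
  | zero => rw [smul_zero]; exact zero_mem _
  | add y z _ _ hy hz => rw [smul_add]; exact add_mem hy hz
  | neg y _ hy => rw [smul_neg]; exact neg_mem hy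

/-- Key vanishing: a wedge with one exact slot and all other slots semiclosed
lies in the subgroup generated by pure exact wedges. -/
theorem ask_KV {n : ℕ} (j : Fin n) (T : Finset (Fin n)) :
    j ∉ T → ∀ v : Fin n → Ω1, (∀ i ∈ T, v i ∈ ask_C p F) → (∀ i ∉ T, ∃ g, v i = DF g) →
      ExteriorAlgebra.ιMulti F n v ∈ ask_Gpp F n := by
  classical
  induction T using Finset.induction_on with
  | empty =>
    intro _ v _ hout
    choose g hg using fun i => hout i (Finset.notMem_empty i)
    have hv : v = fun i => DF (g i) := funext hg
    rw [hv]
    exact AddSubgroup.subset_closure ⟨g, j.pos, rfl⟩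
  | @insert i T' hiT' ih =>
    intro hjT v hT hout
    have hji : j ≠ i := fun h => hjT (h ▸ Finset.mem_insert_self i T')
    have hjT' : j ∉ T' := fun h => hjT (Finset.mem_insert_of_mem h)
    obtain ⟨h0, hh0⟩ := hout j hjT
    have hvi : v i ∈ ask_C p F := hT i (Finset.mem_insert_self i T')
    suffices H : ∀ x ∈ ask_C p F, ιMulti F n (Function.update v i x) ∈ ask_Gpp F n by
      have := H (v i) hvi
      rwa [Function.update_eq_self] at this
    intro x hx
    induction hx using AddSubgroup.closure_induction with
    | mem y hy =>
      obtain ⟨u, w, rfl⟩ := hy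
      set c : F := u ^ p * w ^ (p - 1) with hc
      set u0 : Fin n → Ω1 := Function.update v i (DF w) with hu0
      have hu0j : u0 j = DF h0 := by
        rw [hu0, Function.update_of_ne hji, hh0]
      -- pull the scalar out of slot i and into slot j
      have e1 : ιMulti F n (Function.update v i (c • DF w))
          = c • ιMulti F n u0 := by
        rw [hu0, ← (ιMulti F n).map_update_smul]
      have e2 : c • ιMulti F n u0 = ιMulti F n (Function.update u0 j (c • DF h0)) := by
        rw [(ιMulti F n).map_update_smul, ← hu0j, Function.update_eq_self]
      -- c • dh₀ = d(c h₀) - h₀ • dc,  dc parallel to dw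
      have hdc : DF c = (u ^ p * (((p-1 : ℕ) : F) * w ^ (p - 2))) • DF w := by
        rw [hc, ask_D_frob_mul p F, Derivation.leibniz_pow, ← Nat.cast_smul_eq_nsmul F,
          smul_smul, smul_smul, show p - 1 - 1 = p - 2 from rfl, mul_assoc]
      have e3 : c • DF h0 = DF (c * h0)
          - (h0 * (u ^ p * (((p-1 : ℕ) : F) * w ^ (p - 2)))) • DF w := by
        rw [Derivation.leibniz, hdc, smul_smul]
        abel
      have e4 : ιMulti F n (Function.update u0 j (c • DF h0))
          = ιMulti F n (Function.update u0 j (DF (c * h0)))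
            - (h0 * (u ^ p * (((p-1 : ℕ) : F) * w ^ (p - 2))))
              • ιMulti F n (Function.update u0 j (DF w)) := by
        rw [e3, (ιMulti F n (M := Ω1)).map_update_sub, (ιMulti F n).map_update_smul]
      have e5 : ιMulti F n (Function.update u0 j (DF w)) = 0 := by
        refine (ιMulti F n).map_eq_zero_of_eq _ (i := i) (j := j) ?_ (fun h => hji h.symm)
        rw [Function.update_of_ne (fun h => hji h.symm), hu0, Function.update_self,
          Function.update_self]
      have e6 : ιMulti F n (Function.update u0 j (DF (c * h0))) ∈ ask_Gpp F n := by
        refine ih hjT' (Function.update u0 j (DF (c * h0))) ?_ ?_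
        · intro i' hi'
          have hi'i : i' ≠ i := fun h => hiT' (h ▸ hi')
          have hi'j : i' ≠ j := fun h => hjT' (h ▸ hi')
          rw [Function.update_of_ne hi'j, hu0, Function.update_of_ne hi'i]
          exact hT i' (Finset.mem_insert_of_mem hi')
        · intro i' hi'
          rcases eq_or_ne i' j with rfl | hi'j
          · exact ⟨c * h0, by rw [Function.update_self]⟩
          rcases eq_or_ne i' i with rfl | hi'i
          · exact ⟨w, by rw [Function.update_of_ne hi'j, hu0, Function.update_self]⟩
          · refine ⟨(hout i' ?_).choose, ?_⟩
            · intro hmem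
              rcases Finset.mem_insert.1 hmem with h | h
              · exact hi'i h
              · exact hi' h
            · rw [Function.update_of_ne hi'j, hu0, Function.update_of_ne hi'i]
              exact (hout i' (fun hmem => by
                rcases Finset.mem_insert.1 hmem with h | h
                · exact hi'i h
                · exact hi' h)).choose_spec
      rw [e1, e2, e4, e5, smul_zero, sub_zero]
      exact e6
    | zero =>
      rw [(ιMulti F n).map_update_zero]
      exact zero_mem _
    | add y z _ _ hy hz =>
      rw [(ιMulti F n).map_update_add]
      exact add_mem hy hz
    | neg y _ hy =>
      rw [(ιMulti F n (M := Ω1)).map_update_neg]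
      exact neg_mem hy

end ASK5

section ASK6
variable (p : ℕ) [Fact p.Prime] (F : Type) [Field F] [CharP F p]

local notation "Ω1" => KaehlerDifferential ℤ F
local notation "DF" => KaehlerDifferential.D ℤ F
local notation "ΛF" => ExteriorAlgebra F (KaehlerDifferential ℤ F)

open ExteriorAlgebra

theorem ask_telescope {n : ℕ} (w w' : Fin n → Ω1)
    (hw : ∀ i, w i ∈ ask_C p F) (hw' : ∀ i, w' i ∈ ask_C p F)
    (hdiff : ∀ i, ∃ g, w i - w' i = DF g) :
    ιMulti F n w - ιMulti F n w' ∈ ask_Gpp F n := by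
  classical
  have key : ∀ k : ℕ,
      ιMulti F n (fun i => if (i : ℕ) < k then w' i else w i) - ιMulti F n w
        ∈ ask_Gpp F n := by
    intro k
    induction k with
    | zero =>
      simp only [Nat.not_lt_zero, if_false]
      rw [sub_self]
      exact zero_mem _
    | succ k ihk =>
      by_cases hk : k < n
      · have e1 : (fun i : Fin n => if (i : ℕ) < k + 1 then w' i else w i)
            = Function.update (fun i : Fin n => if (i : ℕ) < k then w' i else w i)
                ⟨k, hk⟩ (w' ⟨k, hk⟩) := by
          funext i
          rcases eq_or_ne i ⟨k, hk⟩ with rfl | hne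
          · rw [Function.update_self, if_pos (Nat.lt_succ_self k : ((⟨k, hk⟩ : Fin n) : ℕ) < k + 1)]
          · have hne' : (i : ℕ) ≠ k := fun h => hne (Fin.ext h)
            rw [Function.update_of_ne hne]
            by_cases h2 : (i : ℕ) < k
            · rw [if_pos (by omega), if_pos h2]
            · rw [if_neg (by omega), if_neg h2]
        have e2 : (if ((⟨k, hk⟩ : Fin n) : ℕ) < k then w' ⟨k, hk⟩ else w ⟨k, hk⟩)
            = w ⟨k, hk⟩ := if_neg (Nat.lt_irrefl k)
        obtain ⟨g, hg⟩ := hdiff ⟨k, hk⟩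
        have e3 : w ⟨k, hk⟩ = w' ⟨k, hk⟩ + DF g := by rw [← hg]; abel
        have e4 : ιMulti F n (fun i : Fin n => if (i : ℕ) < k then w' i else w i)
            = ιMulti F n (Function.update
                (fun i : Fin n => if (i : ℕ) < k then w' i else w i) ⟨k, hk⟩ (w' ⟨k, hk⟩))
              + ιMulti F n (Function.update
                (fun i : Fin n => if (i : ℕ) < k then w' i else w i) ⟨k, hk⟩ (DF g)) := by
          conv_lhs => rw [← Function.update_eq_self (⟨k, hk⟩ : Fin n)
            (fun i : Fin n => if (i : ℕ) < k then w' i else w i), e2, e3]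
          rw [(ιMulti F n).map_update_add]
        have e5 : ιMulti F n (Function.update
            (fun i : Fin n => if (i : ℕ) < k then w' i else w i) ⟨k, hk⟩ (DF g))
              ∈ ask_Gpp F n := by
          refine ask_KV p F ⟨k, hk⟩ (Finset.univ.erase ⟨k, hk⟩)
            (Finset.notMem_erase _ _) _ ?_ ?_
          · intro i hi
            have hne : i ≠ ⟨k, hk⟩ := Finset.ne_of_mem_erase hi
            rw [Function.update_of_ne hne]
            by_cases h2 : (i : ℕ) < k
            · rw [if_pos h2]; exact hw' i
            · rw [if_neg h2]; exact hw i
          · intro i hi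
            have hieq : i = ⟨k, hk⟩ := by
              by_contra hne
              exact hi (Finset.mem_erase.2 ⟨hne, Finset.mem_univ i⟩)
            subst hieq
            exact ⟨g, by rw [Function.update_self]⟩
        have e6 : ιMulti F n (fun i : Fin n => if (i : ℕ) < k + 1 then w' i else w i)
              - ιMulti F n w
            = (ιMulti F n (fun i : Fin n => if (i : ℕ) < k then w' i else w i)
                - ιMulti F n w)
              - ιMulti F n (Function.update
                (fun i : Fin n => if (i : ℕ) < k then w' i else w i) ⟨k, hk⟩ (DF g)) := by
          rw [e1, e4]
          abel
        rw [e6]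
        exact sub_mem ihk e5
      · have e7 : (fun i : Fin n => if (i : ℕ) < k + 1 then w' i else w i)
            = fun i : Fin n => if (i : ℕ) < k then w' i else w i := by
          funext i
          have h1 : (i : ℕ) < k := lt_of_lt_of_le i.isLt (le_of_not_gt hk)
          rw [if_pos (by omega), if_pos h1]
        rw [e7]
        exact ihk
  have hfin := key n
  have hw'eq : (fun i : Fin n => if (i : ℕ) < n then w' i else w i) = w' := by
    funext i
    exact if_pos i.isLt
  rw [hw'eq] at hfin
  have hneg := neg_mem hfin
  rwa [neg_sub] at hneg

end ASK6

section ASK7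
variable (p : ℕ) [Fact p.Prime] (F : Type) [Field F] [CharP F p]

local notation "Ω1" => KaehlerDifferential ℤ F
local notation "DF" => KaehlerDifferential.D ℤ F
local notation "ΛF" => ExteriorAlgebra F (KaehlerDifferential ℤ F)

open ExteriorAlgebra

/-- `Λ / Gpp` with phantom `p`. -/
def ask_Qn (p : ℕ) (F : Type) [Field F] (n : ℕ) : Type :=
  ExteriorAlgebra F (KaehlerDifferential ℤ F) ⧸ ask_Gpp F n

noncomputable instance (n : ℕ) : AddCommGroup (ask_Qn p F n) :=
  inferInstanceAs (AddCommGroup (ΛF ⧸ ask_Gpp F n))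

/-- The quotient map. -/
noncomputable def ask_qnmk (n : ℕ) : ΛF →+ ask_Qn p F n :=
  QuotientAddGroup.mk' (ask_Gpp F n)

theorem ask_qnind {n : ℕ} {motive : ask_Qn p F n → Prop}
    (h : ∀ x, motive (ask_qnmk p F n x)) : ∀ q, motive q :=
  fun q => QuotientAddGroup.induction_on q h

theorem ask_qnmk_eq_zero {n : ℕ} {x : ΛF} (h : x ∈ ask_Gpp F n) : ask_qnmk p F n x = 0 :=
  (QuotientAddGroup.eq_zero_iff _).2 h

noncomputable instance (n : ℕ) : SMul F (ask_Qn p F n) :=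
  ⟨fun c => QuotientAddGroup.lift _
    ((ask_qnmk p F n).comp
      (AddMonoidHom.mk' (fun x : ΛF => c ^ p • x) (fun x y => smul_add _ x y)))
    (by
      intro x hx
      exact ask_qnmk_eq_zero p F (ask_Gpp_smul p F c hx))⟩

theorem ask_qnsmul_mk {n : ℕ} (c : F) (x : ΛF) :
    c • (ask_qnmk p F n x) = ask_qnmk p F n (c ^ p • x) := rfl

noncomputable instance (n : ℕ) : Module F (ask_Qn p F n) where
  one_smul x := by
    induction x using ask_qnind with | _ y =>
    rw [ask_qnsmul_mk, one_pow, one_smul]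
  mul_smul c c' x := by
    induction x using ask_qnind with | _ y =>
    rw [ask_qnsmul_mk, ask_qnsmul_mk, ask_qnsmul_mk, mul_pow, mul_smul]
  smul_zero c := by
    rw [← map_zero (ask_qnmk p F n), ask_qnsmul_mk, smul_zero]
  smul_add c x y := by
    induction x using ask_qnind with | _ a =>
    induction y using ask_qnind with | _ b =>
    rw [← map_add, ask_qnsmul_mk, ask_qnsmul_mk, ask_qnsmul_mk, smul_add, map_add]
  add_smul c c' x := by
    induction x using ask_qnind with | _ y =>
    rw [ask_qnsmul_mk, ask_qnsmul_mk, ask_qnsmul_mk, add_pow_char, add_smul, map_add]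
  zero_smul x := by
    induction x using ask_qnind with | _ y =>
    have hp : p ≠ 0 := (Fact.out : p.Prime).ne_zero
    rw [ask_qnsmul_mk, zero_pow hp, zero_smul, map_zero]

/-- The degree-`n` alternating map underlying the inverse-Cartier-twisted projection. -/
noncomputable def ask_fAlt (n : ℕ) : AlternatingMap F Ω1 (ask_Qn p F n) (Fin n) where
  toFun v := ask_qnmk p F n (ιMulti F n fun i => ask_gam1 p F (v i))
  map_update_add' := by
    intro _ v i x y
    have hc : ∀ z : Ω1, (fun i' => ask_gam1 p F (Function.update v i z i'))
        = Function.update (fun i' => ask_gam1 p F (v i')) i (ask_gam1 p F z) := by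
      intro z
      exact Function.comp_update (ask_gam1 p F) v i z
    rw [hc, hc, hc, ask_gam1_add, (ιMulti F n).map_update_add, map_add]
  map_update_smul' := by
    intro _ v i c x
    have hc : ∀ z : Ω1, (fun i' => ask_gam1 p F (Function.update v i z i'))
        = Function.update (fun i' => ask_gam1 p F (v i')) i (ask_gam1 p F z) := by
      intro z
      exact Function.comp_update (ask_gam1 p F) v i z
    rw [hc, hc, ask_gam1_smul, (ιMulti F n).map_update_smul, ← ask_qnsmul_mk]
  map_eq_zero_of_eq' := by
    intro v i j hv hij
    have h0 : (ιMulti F n fun i' => ask_gam1 p F (v i')) = 0 := by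
      refine (ιMulti F n).map_eq_zero_of_eq _ (i := i) (j := j) (by rw [hv]) hij
    rw [h0, map_zero]

theorem ask_fAlt_apply (n : ℕ) (v : Fin n → Ω1) :
    ask_fAlt p F n v = ask_qnmk p F n (ιMulti F n fun i => ask_gam1 p F (v i)) := rfl

/-- The twisted projection `Λ → Λ/Gpp`. -/
noncomputable def ask_Gam (n : ℕ) : ΛF →ₗ[F] ask_Qn p F n :=
  ExteriorAlgebra.liftAlternating
    (Function.update (fun i => (0 : AlternatingMap F Ω1 (ask_Qn p F n) (Fin i))) n
      (ask_fAlt p F n))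

theorem ask_Gam_apply (n : ℕ) (v : Fin n → Ω1) :
    ask_Gam p F n (ιMulti F n v)
      = ask_qnmk p F n (ιMulti F n fun i => ask_gam1 p F (v i)) := by
  rw [ask_Gam, ExteriorAlgebra.liftAlternating_apply_ιMulti, Function.update_self,
    ask_fAlt_apply]

end ASK7

section ASK8
variable (p : ℕ) [Fact p.Prime] (F : Type) [Field F] [CharP F p]

local notation "Ω1" => KaehlerDifferential ℤ F
local notation "DF" => KaehlerDifferential.D ℤ F
local notation "ΛF" => ExteriorAlgebra F (KaehlerDifferential ℤ F)

open ExteriorAlgebra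

theorem ask_inv_scalar {b : F} (hb : b ≠ 0) : (b⁻¹) ^ p * b ^ (p - 1) = b⁻¹ := by
  have hp : p.Prime := Fact.out
  obtain ⟨q, hq⟩ : ∃ q, p = q + 1 := ⟨p - 1, by have := hp.pos; omega⟩
  subst hq
  simp only [Nat.add_sub_cancel]
  have h1 : (b⁻¹) ^ q * b ^ q = 1 := by rw [← mul_pow, inv_mul_cancel₀ hb, one_pow]
  calc (b⁻¹) ^ (q + 1) * b ^ q = ((b⁻¹) ^ q * b ^ q) * b⁻¹ := by ring
    _ = b⁻¹ := by rw [h1, one_mul]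

theorem ask_dlog_mem_C {b : F} (hb : b ≠ 0) : b⁻¹ • DF b ∈ ask_C p F := by
  refine AddSubgroup.subset_closure ⟨b⁻¹, b, ?_⟩
  rw [ask_inv_scalar p F hb]

theorem ask_dlog_gam1_sub {b : F} (hb : b ≠ 0) :
    ∃ g : F, ask_gam1 p F (b⁻¹ • DF b) - b⁻¹ • DF b = DF g := by
  have h1 : ask_q1mk p F (ask_gam1 p F (b⁻¹ • DF b)) = ask_q1mk p F (b⁻¹ • DF b) := by
    rw [ask_mkq1_gam1, (ask_lam p F).map_smul, ask_lam_D, ask_q1smul_mk, smul_smul,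
      ask_inv_scalar p F hb]
  have h2 : ask_gam1 p F (b⁻¹ • DF b) - b⁻¹ • DF b ∈ ask_dSub F := by
    have h3 := sub_eq_zero.2 h1
    rw [← map_sub] at h3
    exact (ask_q1mk_zero_iff p F).1 h3
  obtain ⟨g, hg⟩ := h2
  exact ⟨g, hg.symm⟩

theorem ask_Gpp_le (n : ℕ) (d : ΛF →+ ΛF) (hd : IsExtDer F d) :
    ask_Gpp F n ≤ AddSubgroup.map d (nForms F (n - 1)) := by
  rw [ask_Gpp, AddSubgroup.closure_le]
  rintro x ⟨g, hn, rfl⟩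
  obtain ⟨m, rfl⟩ : ∃ m, n = m + 1 := ⟨n - 1, by omega⟩
  simp only [Nat.add_sub_cancel, SetLike.mem_coe]
  refine AddSubgroup.mem_map.mpr
    ⟨(g 0) • ιMulti F m fun i => DF (g i.succ), ?_, ?_⟩
  · exact AddSubgroup.subset_closure ⟨g 0, fun i => g i.succ, rfl⟩
  · rw [hd m (g 0) fun i => g i.succ]
    congr 1
    funext i
    refine Fin.cases ?_ ?_ i
    · rw [Fin.cons_zero]
    · intro i'
      rw [Fin.cons_succ]

end ASK8

/-- Let `F` be a field of characteristic `p`.  The Artin–Schreier–Kato operator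
`℘`, sending `a·(db₁/b₁)∧⋯∧(db_n/b_n)` to `(a^p − a)·(db₁/b₁)∧⋯∧(db_n/b_n)` and extended
additively, is a well-defined additive group homomorphism from the subgroup of `Ω^n_F`
generated by logarithmic forms to `Ω^n_F / dΩ^{n-1}_F`. -/
theorem artin_schreier_kato_well_defined
    (p : ℕ) [Fact p.Prime] (F : Type) [Field F] [CharP F p] (n : ℕ)
    (d : ExteriorAlgebra F (KaehlerDifferential ℤ F) →+
         ExteriorAlgebra F (KaehlerDifferential ℤ F))
    (hd : IsExtDer F d) :
    ∃ P : ↥(logForms F n) →+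
        (ExteriorAlgebra F (KaehlerDifferential ℤ F) ⧸
          AddSubgroup.map d (nForms F (n - 1))),
      ∀ (a : F) (b : Fin n → F) (hb : ∀ i, b i ≠ 0)
        (hmem : a • ExteriorAlgebra.ιMulti F n
            (fun i => (b i)⁻¹ • KaehlerDifferential.D ℤ F (b i)) ∈ logForms F n),
        P ⟨_, hmem⟩ = QuotientAddGroup.mk
          ((a ^ p - a) • ExteriorAlgebra.ιMulti F n
            fun i => (b i)⁻¹ • KaehlerDifferential.D ℤ F (b i)) := by
  classical
  set G := AddSubgroup.map d (nForms F (n - 1)) with hG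
  have hle : ask_Gpp F n ≤ G := ask_Gpp_le F n d hd
  set π : ask_Qn p F n →+ (ExteriorAlgebra F (KaehlerDifferential ℤ F) ⧸ G) :=
    QuotientAddGroup.lift (ask_Gpp F n) (QuotientAddGroup.mk' G)
      (fun x hx => (QuotientAddGroup.eq_zero_iff _).2 (hle hx)) with hπ
  set Φ : ExteriorAlgebra F (KaehlerDifferential ℤ F) →+
      (ExteriorAlgebra F (KaehlerDifferential ℤ F) ⧸ G) :=
    (π.comp (ask_Gam p F n).toAddMonoidHom) - QuotientAddGroup.mk' G with hΦ
  refine ⟨Φ.comp (logForms F n).subtype, ?_⟩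
  intro a b hb hmem
  set dlog : Fin n → KaehlerDifferential ℤ F :=
    fun i => (b i)⁻¹ • KaehlerDifferential.D ℤ F (b i) with hdlog
  set X := ExteriorAlgebra.ιMulti F n dlog with hX
  set A := ExteriorAlgebra.ιMulti F n fun i => ask_gam1 p F (dlog i) with hA
  have hGam : ask_Gam p F n (a • X) = ask_qnmk p F n (a ^ p • A) := by
    rw [map_smul, hX, ask_Gam_apply, ask_qnsmul_mk, hA]
  have hπmk : ∀ y, π (ask_qnmk p F n y) = QuotientAddGroup.mk' G y := by
    intro y
    rw [hπ, ask_qnmk]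
    exact QuotientAddGroup.lift_mk' _ _ y
  have hval : (Φ.comp (logForms F n).subtype) ⟨_, hmem⟩ = Φ (a • X) := rfl
  rw [hval, hΦ, AddMonoidHom.sub_apply, AddMonoidHom.comp_apply]
  rw [show (ask_Gam p F n).toAddMonoidHom (a • X) = ask_Gam p F n (a • X) from rfl,
    hGam, hπmk, ← map_sub,
    show (QuotientAddGroup.mk ((a ^ p - a) • ExteriorAlgebra.ιMulti F n fun i =>
      (b i)⁻¹ • KaehlerDifferential.D ℤ F (b i)) :
        ExteriorAlgebra F (KaehlerDifferential ℤ F) ⧸ G)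
      = QuotientAddGroup.mk' G ((a ^ p - a) • X) from rfl,
    QuotientAddGroup.mk'_eq_mk']
  have hAX : A - X ∈ ask_Gpp F n := by
    refine ask_telescope p F (fun i => ask_gam1 p F (dlog i)) dlog
      (fun i => ask_gam1_mem_C p F (dlog i)) (fun i => ask_dlog_mem_C p F (hb i))
      (fun i => ask_dlog_gam1_sub p F (hb i))
  have hsmul : a ^ p • (A - X) ∈ ask_Gpp F n := ask_Gpp_smul p F a hAX
  refine ⟨-(a ^ p • (A - X)), neg_mem (hle hsmul), ?_⟩
  rw [smul_sub, sub_smul]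
  abel
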